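/- arXiv:0708.3867 — 2 statements merged into one kernel-verified Lean document; each statement's English description precedes it below -/
import Mathlib

section
/- Let D be a bounded domain in ℂ, V : ℂ → ℝ a continuous function, N a positive integer, and P_n a monic polynomial of degree n satisfying ∬_D P_n(z) conj(z)^m e^{-N V(z)} d²z = 0 for all 0 ≤ m < n, and set h_n = ∬_D P_n(z) conj(z)^n e^{-N V(z)} d²z (which is real). Then the Cauchy-type transform F(z) = (1/π) ∬_D conj(P_n(ζ)) e^{-N V(ζ)} / (ζ − z) d²ζ satisfies z^{n+1} F(z) → −h_n/π as |z| → ∞; in particular F(z) · z^n = O(1/z) as |z| → ∞. -/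
open MeasureTheory Complex Filter

/-- If the monic polynomial `P_n` of degree `n` is orthogonal to
`conj(z)^m` for all `m < n` (with respect to `e^{-N V} χ_D d²z`) and
`h_n = ∬_D P_n(z) conj(z)^n e^{-N V(z)} d²z` (real), then the Cauchy-type transform
`F z = (1/π) ∬_D conj (P_n ζ) e^{-N V ζ}/(ζ − z) d²ζ` satisfies
`z^{n+1} F z → −h_n/π` as `|z| → ∞`; in particular `F z * z^n = O(1/z)`. -/
theorem cauchy_transform_asymptotics_of_orthogonal
    (D : Set ℂ) (hD_open : IsOpen D) (hD_conn : IsConnected D)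
    (hD_bdd : Bornology.IsBounded D)
    (V : ℂ → ℝ) (hV : Continuous V)
    (N : ℕ) (hN : 0 < N)
    (n : ℕ) (P : Polynomial ℂ) (hmonic : P.Monic) (hdeg : P.natDegree = n)
    (horth : ∀ m < n,
      ∫ z in D, P.eval z * ((starRingEnd ℂ) z) ^ m * Real.exp (-(N : ℝ) * V z) = 0)
    (hn : ℝ)
    (hhn : (hn : ℂ) =
      ∫ z in D, P.eval z * ((starRingEnd ℂ) z) ^ n * Real.exp (-(N : ℝ) * V z))
    (F : ℂ → ℂ)
    (hF : ∀ z, F z = (1 / Real.pi) *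
      ∫ ζ in D, (starRingEnd ℂ) (P.eval ζ) * Real.exp (-(N : ℝ) * V ζ) / (ζ - z)) :
    Tendsto (fun z : ℂ => z ^ (n + 1) * F z) (Bornology.cobounded ℂ)
        (nhds (-(hn / Real.pi) : ℂ)) ∧
      (fun z : ℂ => F z * z ^ n) =O[Bornology.cobounded ℂ] (fun z : ℂ => z⁻¹) := by
  classical
  set g : ℂ → ℂ := fun ζ => (starRingEnd ℂ) (P.eval ζ) * (Real.exp (-(N : ℝ) * V ζ) : ℂ)
    with hg_def
  have hg_cont : Continuous g := by
    apply Continuous.mul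
    · exact Complex.continuous_conj.comp P.continuous
    · exact Complex.continuous_ofReal.comp (Real.continuous_exp.comp (by continuity))
  obtain ⟨R, hR⟩ := hD_bdd.subset_closedBall 0
  have hRcl : closure D ⊆ Metric.closedBall 0 R :=
    closure_minimal hR Metric.isClosed_closedBall
  have hK : IsCompact (closure D) := hD_bdd.isCompact_closure
  have hDmeas : MeasurableSet D := hD_open.measurableSet
  have hvol : volume D < ⊤ := hD_bdd.measure_lt_top
  -- integrability of continuous functions on D
  have hint : ∀ (f : ℂ → ℂ), ContinuousOn f (closure D) → IntegrableOn f D := by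
    intro f hf
    exact (hf.integrableOn_compact hK).mono_set subset_closure
  -- moments
  have hmom : ∀ k : ℕ, (∫ ζ in D, g ζ * ζ ^ k) =
      (starRingEnd ℂ) (∫ ζ in D, P.eval ζ * ((starRingEnd ℂ) ζ) ^ k *
        (Real.exp (-(N : ℝ) * V ζ) : ℂ)) := by
    intro k
    rw [← integral_conj]
    refine setIntegral_congr_fun hDmeas ?_
    intro ζ _
    simp only [hg_def, map_mul, map_pow, Complex.conj_conj, Complex.conj_ofReal]
    ring
  have hmom0 : ∀ k < n, (∫ ζ in D, g ζ * ζ ^ k) = 0 := by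
    intro k hk
    rw [hmom k, horth k hk, map_zero]
  have hmomn : (∫ ζ in D, g ζ * ζ ^ n) = (hn : ℂ) := by
    rw [hmom n, ← hhn, Complex.conj_ofReal]
  -- the auxiliary integral
  set G : ℂ → ℂ := fun z => ∫ ζ in D, g ζ * ζ ^ (n + 1) / (ζ - z) with hG_def
  -- the key exact formula for z outside closure D
  have hkey : ∀ z : ℂ, z ∉ closure D →
      z ^ (n + 1) * F z = (1 / Real.pi : ℂ) * (G z - (hn : ℂ)) := by
    intro z hz
    have hzne : ∀ ζ ∈ closure D, ζ - z ≠ 0 := by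
      intro ζ hζ h0
      exact hz (by rwa [sub_eq_zero.mp h0] at hζ)
    have hcont_sub : ContinuousOn (fun ζ : ℂ => ζ - z) (closure D) :=
      (continuous_id.sub continuous_const).continuousOn
    have hA : IntegrableOn (fun ζ : ℂ => g ζ * ζ ^ (n + 1) / (ζ - z)) D := by
      refine hint _ ?_
      exact ((hg_cont.mul (continuous_pow (n + 1))).continuousOn.div hcont_sub hzne)
    have hB : IntegrableOn
        (fun ζ : ℂ => ∑ k ∈ Finset.range (n + 1), g ζ * ζ ^ k * z ^ (n - k)) D := by
      apply MeasureTheory.integrable_finset_sum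
      intro k _
      exact hint _ ((hg_cont.mul (continuous_pow k)).mul continuous_const).continuousOn
    have step1 : z ^ (n + 1) * F z =
        (1 / Real.pi : ℂ) * ∫ ζ in D, z ^ (n + 1) * (g ζ / (ζ - z)) := by
      rw [hF z, integral_const_mul]
      ring
    have step2 : (∫ ζ in D, z ^ (n + 1) * (g ζ / (ζ - z))) =
        ∫ ζ in D, (g ζ * ζ ^ (n + 1) / (ζ - z) -
          ∑ k ∈ Finset.range (n + 1), g ζ * ζ ^ k * z ^ (n - k)) := by
      refine setIntegral_congr_fun hDmeas ?_
      intro ζ hζ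
      have hne : ζ - z ≠ 0 := hzne ζ (subset_closure hζ)
      have hgeom := geom_sum₂_mul ζ z (n + 1)
      simp only [Nat.add_sub_cancel] at hgeom
      have hsum : (∑ k ∈ Finset.range (n + 1), g ζ * ζ ^ k * z ^ (n - k)) =
          g ζ * ∑ k ∈ Finset.range (n + 1), ζ ^ k * z ^ (n - k) := by
        rw [Finset.mul_sum]
        exact Finset.sum_congr rfl fun k _ => by ring
      show z ^ (n + 1) * (g ζ / (ζ - z)) = g ζ * ζ ^ (n + 1) / (ζ - z) -
        ∑ k ∈ Finset.range (n + 1), g ζ * ζ ^ k * z ^ (n - k)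
      rw [hsum]
      field_simp
      linear_combination (g ζ) * hgeom
    have step3 : (∫ ζ in D, (g ζ * ζ ^ (n + 1) / (ζ - z) -
          ∑ k ∈ Finset.range (n + 1), g ζ * ζ ^ k * z ^ (n - k))) =
        G z - ∑ k ∈ Finset.range (n + 1), (∫ ζ in D, g ζ * ζ ^ k) * z ^ (n - k) := by
      rw [MeasureTheory.integral_sub hA hB]
      congr 1
      rw [MeasureTheory.integral_finset_sum _ ((fun k _ =>
        hint _ ((hg_cont.mul (continuous_pow k)).mul continuous_const).continuousOn) :
        ∀ k ∈ Finset.range (n + 1), IntegrableOn (fun ζ : ℂ => g ζ * ζ ^ k * z ^ (n - k)) D)]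
      exact Finset.sum_congr rfl fun k _ => MeasureTheory.integral_mul_const _ _
    have step4 : (∑ k ∈ Finset.range (n + 1), (∫ ζ in D, g ζ * ζ ^ k) * z ^ (n - k))
        = (hn : ℂ) := by
      rw [Finset.sum_eq_single n]
      · rw [hmomn, Nat.sub_self, pow_zero, mul_one]
      · intro k hk hkn
        rw [hmom0 k (lt_of_le_of_ne (Nat.lt_succ_iff.mp (Finset.mem_range.mp hk)) hkn),
          zero_mul]
      · intro h
        exact absurd (Finset.self_mem_range_succ n) h
    rw [step1, step2, step3, step4]
  -- G tends to 0 at infinity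
  obtain ⟨M, hM⟩ := hK.exists_bound_of_continuousOn
    ((hg_cont.mul (continuous_pow (n + 1))).continuousOn :
      ContinuousOn (fun ζ : ℂ => g ζ * ζ ^ (n + 1)) (closure D))
  set M' : ℝ := max M 0 with hM'_def
  have hM'0 : 0 ≤ M' := le_max_right _ _
  have hM' : ∀ ζ ∈ closure D, ‖g ζ * ζ ^ (n + 1)‖ ≤ M' :=
    fun ζ hζ => (hM ζ hζ).trans (le_max_left _ _)
  have hGlim : Tendsto G (Bornology.cobounded ℂ) (nhds 0) := by
    have hbound : ∀ᶠ z : ℂ in Bornology.cobounded ℂ,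
        ‖G z‖ ≤ M' / (‖z‖ - R) * (volume D).toReal := by
      filter_upwards [tendsto_norm_cobounded_atTop.eventually (eventually_gt_atTop R)]
        with z hz
      have hpos : 0 < ‖z‖ - R := sub_pos.mpr hz
      refine norm_setIntegral_le_of_norm_le_const hvol ?_
      · intro ζ hζ
        have hζR : ‖ζ‖ ≤ R := by
          have := hR hζ
          simpa [Metric.mem_closedBall, Complex.dist_eq] using this
        have hden : ‖z‖ - R ≤ ‖ζ - z‖ := by
          have := norm_sub_norm_le z ζ
          calc ‖z‖ - R ≤ ‖z‖ - ‖ζ‖ := by linarith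
            _ ≤ ‖z - ζ‖ := norm_sub_norm_le z ζ
            _ = ‖ζ - z‖ := norm_sub_rev z ζ
        rw [norm_div]
        exact div_le_div₀ hM'0 (hM' ζ (subset_closure hζ)) hpos hden
    have hlim0 : Tendsto (fun z : ℂ => M' / (‖z‖ - R) * (volume D).toReal)
        (Bornology.cobounded ℂ) (nhds 0) := by
      have h1 : Tendsto (fun t : ℝ => t - R) atTop atTop :=
        tendsto_atTop_add_const_right _ (-R) tendsto_id
      have h2 : Tendsto (fun t : ℝ => M' / (t - R) * (volume D).toReal) atTop (nhds 0) := by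
        have := ((tendsto_inv_atTop_zero.comp h1).const_mul M').mul_const
          ((volume D).toReal)
        simpa [div_eq_mul_inv, Function.comp] using this
      exact h2.comp tendsto_norm_cobounded_atTop
    exact squeeze_zero_norm' hbound hlim0
  have hout : ∀ᶠ z : ℂ in Bornology.cobounded ℂ, z ∉ closure D := by
    filter_upwards [tendsto_norm_cobounded_atTop.eventually (eventually_gt_atTop R)]
      with z hz hmem
    have := hRcl hmem
    simp only [Metric.mem_closedBall, Complex.dist_eq, sub_zero] at this
    linarith
  -- Main limit
  have hmain : Tendsto (fun z : ℂ => z ^ (n + 1) * F z) (Bornology.cobounded ℂ)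
      (nhds (-(hn / Real.pi) : ℂ)) := by
    have h1 : Tendsto (fun z : ℂ => (1 / Real.pi : ℂ) * (G z - (hn : ℂ)))
        (Bornology.cobounded ℂ) (nhds ((1 / Real.pi : ℂ) * (0 - (hn : ℂ)))) :=
      (hGlim.sub tendsto_const_nhds).const_mul _
    have heq : ((1 / Real.pi : ℂ) * (0 - (hn : ℂ))) = (-(hn / Real.pi) : ℂ) := by
      push_cast
      ring
    rw [heq] at h1
    refine h1.congr' ?_
    filter_upwards [hout] with z hz
    exact (hkey z hz).symm
  refine ⟨hmain, ?_⟩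
  have hO1 : (fun z : ℂ => z ^ (n + 1) * F z) =O[Bornology.cobounded ℂ]
      (fun _ : ℂ => (1 : ℂ)) := hmain.isBigO_one ℂ
  have hO2 := hO1.mul (Asymptotics.isBigO_refl (fun z : ℂ => z⁻¹) (Bornology.cobounded ℂ))
  refine hO2.congr' ?_ ?_
  · filter_upwards [tendsto_norm_cobounded_atTop.eventually (eventually_gt_atTop 0)]
      with z hz
    have hz0 : z ≠ 0 := by
      intro h; rw [h] at hz; simp at hz
    field_simp
    ring
  · filter_upwards with z
    simp
end

section
/- Let D be a bounded domain in ℂ, V : ℂ → ℝ a continuous function, N a positive integer, and P a polynomial of degree at most n. If the Cauchy-type transform F(z) = (1/π) ∬_D conj(P(ζ)) e^{-N V(ζ)} / (ζ − z) d²ζ satisfies F(z) = O(z^{−n−1}) as |z| → ∞ (i.e., |z^{n+1} F(z)| is bounded for all sufficiently large |z|), then ∬_D P(z) conj(z)^m e^{-N V(z)} d²z = 0 for all 0 ≤ m < n. -/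
open MeasureTheory Complex Filter

/-- If `P` has degree at most `n` and its Cauchy-type transform
`F z = (1/π) ∬_D conj (P ζ) e^{-N V ζ} / (ζ − z) d²ζ` satisfies `F z = O(z^{−n−1})` as
`|z| → ∞` (i.e. `|z^{n+1} F z|` is bounded for all sufficiently large `|z|`), then
`∬_D P(z) conj(z)^m e^{-N V(z)} d²z = 0` for all `0 ≤ m < n`. -/
theorem orthogonality_of_cauchy_transform_decay
    (D : Set ℂ) (hD_open : IsOpen D) (hD_conn : IsConnected D)
    (hD_bdd : Bornology.IsBounded D)
    (V : ℂ → ℝ) (hV : Continuous V)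
    (N : ℕ) (hN : 0 < N)
    (n : ℕ) (P : Polynomial ℂ) (hdeg : P.natDegree ≤ n)
    (F : ℂ → ℂ)
    (hF : ∀ z, F z = (1 / Real.pi) *
      ∫ ζ in D, (starRingEnd ℂ) (P.eval ζ) * Real.exp (-(N : ℝ) * V ζ) / (ζ - z))
    (hbound : ∃ C R : ℝ, ∀ z : ℂ, R < ‖z‖ →
      ‖z ^ (n + 1) * F z‖ ≤ C) :
    ∀ m < n,
      ∫ z in D, P.eval z * ((starRingEnd ℂ) z) ^ m * Real.exp (-(N : ℝ) * V z) = 0 := by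
  obtain ⟨C, R, hCR⟩ := hbound
  set f : ℂ → ℂ := fun ζ => (starRingEnd ℂ) (P.eval ζ) * Real.exp (-(N : ℝ) * V ζ) with hfdef
  have hf_cont : Continuous f := by
    apply Continuous.mul
    · exact Complex.continuous_conj.comp (P.continuous)
    · exact Complex.continuous_ofReal.comp (Real.continuous_exp.comp (by fun_prop))
  have hDm : MeasurableSet D := hD_open.measurableSet
  have hKc : IsCompact (closure D) := hD_bdd.isCompact_closure
  obtain ⟨r0, hr0⟩ := hD_bdd.closure.subset_closedBall 0
  set r : ℝ := max r0 1 with hrdef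
  have hr1 : (1 : ℝ) ≤ r := le_max_right _ _
  have hrD : ∀ ζ ∈ closure D, ‖ζ‖ ≤ r := by
    intro ζ hζ
    have := hr0 hζ
    simp only [Metric.mem_closedBall, dist_zero_right] at this
    exact le_trans this (le_max_left _ _)
  have hvol : volume D < ⊤ := by
    refine lt_of_le_of_lt (measure_mono (subset_closure.trans hr0)) ?_
    exact (isCompact_closedBall 0 r0).measure_lt_top
  set A : ℝ := (volume D).toReal with hAdef
  have hA0 : 0 ≤ A := ENNReal.toReal_nonneg
  -- integrability of continuous functions over D
  have hInt : ∀ g : ℂ → ℂ, ContinuousOn g (closure D) → IntegrableOn g D volume := by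
    intro g hg
    exact (hg.integrableOn_compact hKc).mono_set subset_closure
  set c : ℕ → ℂ := fun k => ∫ ζ in D, f ζ * ζ ^ k with hcdef
  have hintk : ∀ k : ℕ, IntegrableOn (fun ζ => f ζ * ζ ^ k) D volume := by
    intro k
    exact hInt _ ((hf_cont.mul (continuous_pow k)).continuousOn)
  -- bound for f ζ * ζ^(m+1) on closure D
  -- main claim
  have key : ∀ m, m < n → c m = 0 := by
    intro m
    induction m using Nat.strong_induction_on with
    | _ m ih =>
    intro hmn
    -- bound B for the numerator of the remainder
    obtain ⟨B0, hB0⟩ := hKc.exists_bound_of_continuousOn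
      ((hf_cont.mul (continuous_pow (m + 1))).continuousOn)
    set B : ℝ := max B0 0 with hBdef
    have hB : ∀ ζ ∈ closure D, ‖f ζ * ζ ^ (m + 1)‖ ≤ B :=
      fun ζ hζ => le_trans (hB0 ζ hζ) (le_max_left _ _)
    have hB0' : (0 : ℝ) ≤ B := le_max_right _ _
    set T : ℝ := max R (max (2 * r) 1) with hTdef
    set K : ℝ := Real.pi * C + 2 * B * A with hKdef
    -- for all t > T, ‖c m‖ ≤ K / t
    have hmain : ∀ t : ℝ, T < t → ‖c m‖ ≤ K / t := by
      intro t ht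
      have htR : R < t := lt_of_le_of_lt (le_max_left _ _) ht
      have ht2r : 2 * r < t := lt_of_le_of_lt (le_trans (le_max_left _ _) (le_max_right _ _)) ht
      have ht1 : (1 : ℝ) < t := lt_of_le_of_lt (le_trans (le_max_right _ _) (le_max_right _ _)) ht
      have ht0 : (0 : ℝ) < t := lt_trans one_pos ht1
      set z : ℂ := (t : ℂ) with hzdef
      have hzabs : ‖z‖ = t := by
        rw [hzdef, Complex.norm_real, Real.norm_eq_abs, abs_of_pos ht0]
      have hzD : ∀ ζ ∈ closure D, t / 2 ≤ ‖ζ - z‖ := by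
        intro ζ hζ
        have h1 : ‖ζ‖ ≤ r := hrD ζ hζ
        have h2 := norm_sub_norm_le z ζ
        rw [norm_sub_rev] at h2
        nlinarith [h2, hzabs]
      have hzne : ∀ ζ ∈ closure D, ζ - z ≠ 0 := by
        intro ζ hζ h
        have := hzD ζ hζ
        rw [h] at this
        simp at this
        nlinarith
      -- integrability of the remainder integrand and the Cauchy kernel integrand
      have hcont_inv : ContinuousOn (fun ζ => (ζ - z)⁻¹) (closure D) := by
        apply ContinuousOn.inv₀
        · exact (continuous_id.sub continuous_const).continuousOn
        · exact fun ζ hζ => hzne ζ hζ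
      have hintR : IntegrableOn (fun ζ => f ζ * ζ ^ (m + 1) / (ζ - z)) D volume := by
        apply hInt
        exact ((hf_cont.mul (continuous_pow (m + 1))).continuousOn).mul hcont_inv |>.congr
          (fun ζ hζ => by rw [div_eq_mul_inv]; rfl)
      have hintC : IntegrableOn (fun ζ => f ζ / (ζ - z)) D volume := by
        apply hInt
        exact (hf_cont.continuousOn.mul hcont_inv).congr
          (fun ζ hζ => by rw [div_eq_mul_inv]; rfl)
      -- the geometric expansion identity, pointwise on D
      have hpt : ∀ ζ ∈ D, f ζ * z ^ (m + 1) / (ζ - z)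
          = f ζ * ζ ^ (m + 1) / (ζ - z)
            - ∑ i ∈ Finset.range (m + 1), z ^ (m - i) * (f ζ * ζ ^ i) := by
        intro ζ hζ
        have hne : ζ - z ≠ 0 := hzne ζ (subset_closure hζ)
        have hgeo := geom_sum₂_mul ζ z (m + 1)
        simp only [Nat.add_sub_cancel] at hgeo
        have hsum : ∑ i ∈ Finset.range (m + 1), z ^ (m - i) * (f ζ * ζ ^ i)
            = f ζ * ∑ i ∈ Finset.range (m + 1), ζ ^ i * z ^ (m - i) := by
          rw [Finset.mul_sum]
          apply Finset.sum_congr rfl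
          intro i hi
          ring
        rw [hsum]
        field_simp
        linear_combination (f ζ) * hgeo
      -- integrate the identity
      have hIeq : ∫ ζ in D, f ζ * z ^ (m + 1) / (ζ - z)
          = (∫ ζ in D, f ζ * ζ ^ (m + 1) / (ζ - z))
            - ∑ i ∈ Finset.range (m + 1), z ^ (m - i) * c i := by
        rw [setIntegral_congr_fun hDm (fun ζ hζ => hpt ζ hζ)]
        rw [integral_sub hintR]
        · congr 1
          rw [integral_finset_sum]
          · apply Finset.sum_congr rfl
            intro i _
            rw [integral_const_mul]
          · intro i _
            exact (hintk i).const_mul _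
        · apply integrable_finset_sum
          intro i _
          exact (hintk i).const_mul _
      -- the sum collapses to c m using the induction hypothesis
      have hsumc : ∑ i ∈ Finset.range (m + 1), z ^ (m - i) * c i = c m := by
        rw [Finset.sum_range_succ]
        have : ∑ i ∈ Finset.range m, z ^ (m - i) * c i = 0 := by
          apply Finset.sum_eq_zero
          intro i hi
          rw [ih i (Finset.mem_range.mp hi) (lt_trans (Finset.mem_range.mp hi) hmn), mul_zero]
        rw [this, zero_add, Nat.sub_self, pow_zero, one_mul]
      -- relate the LHS to F
      have hG : (∫ ζ in D, f ζ / (ζ - z)) = (Real.pi : ℂ) * F z := by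
        rw [hF z]
        rw [← mul_assoc]
        rw [show ((Real.pi : ℂ) * (1 / (Real.pi : ℝ) : ℂ)) = 1 by
          push_cast
          field_simp [Complex.ofReal_ne_zero.mpr Real.pi_ne_zero]]
        rw [one_mul]
      have hLHS : ∫ ζ in D, f ζ * z ^ (m + 1) / (ζ - z)
          = z ^ (m + 1) * ((Real.pi : ℂ) * F z) := by
        rw [← hG, ← integral_const_mul]
        apply setIntegral_congr_fun hDm
        intro ζ hζ
        ring
      -- so: c m = remainder - z^(m+1) * π * F z
      have hcm : c m = (∫ ζ in D, f ζ * ζ ^ (m + 1) / (ζ - z))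
          - z ^ (m + 1) * ((Real.pi : ℂ) * F z) := by
        have := hIeq
        rw [hLHS, hsumc] at this
        linear_combination this
      -- bound the remainder
      have hRb : ‖∫ ζ in D, f ζ * ζ ^ (m + 1) / (ζ - z)‖ ≤ (2 * B / t) * A := by
        apply norm_setIntegral_le_of_norm_le_const hvol
        intro ζ hζ
        have hζc : ζ ∈ closure D := subset_closure hζ
        rw [norm_div]
        have h1 : ‖f ζ * ζ ^ (m + 1)‖ ≤ B := hB ζ hζc
        have h2 : t / 2 ≤ ‖ζ - z‖ := hzD ζ hζc
        have h3 : (0:ℝ) < t / 2 := by linarith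
        calc ‖f ζ * ζ ^ (m + 1)‖ / ‖ζ - z‖ ≤ B / (t / 2) :=
              div_le_div₀ hB0' h1 h3 h2
          _ = 2 * B / t := by
              rw [div_div_eq_mul_div]
              ring
      -- bound the F term
      have hFb : ‖z ^ (m + 1) * ((Real.pi : ℂ) * F z)‖ ≤ Real.pi * C / t := by
        have habs : ‖z ^ (n + 1) * F z‖ ≤ C := hCR z (by rw [hzabs]; exact htR)
        have hC0 : (0:ℝ) ≤ C := le_trans (norm_nonneg _) habs
        have hFz : ‖F z‖ ≤ C / t ^ (n + 1) := by
          rw [norm_mul, norm_pow, hzabs] at habs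
          rw [div_eq_inv_mul, le_inv_mul_iff₀ (pow_pos ht0 _)]
          exact habs
        have hnorm : ‖z ^ (m + 1) * ((Real.pi : ℂ) * F z)‖
            = t ^ (m + 1) * (Real.pi * ‖F z‖) := by
          simp only [norm_mul, norm_pow, hzabs, Complex.norm_real, Real.norm_eq_abs,
            abs_of_pos Real.pi_pos]
        rw [hnorm]
        have h1 : t ^ (m + 1) * (Real.pi * ‖F z‖)
            ≤ t ^ (m + 1) * (Real.pi * (C / t ^ (n + 1))) := by
          apply mul_le_mul_of_nonneg_left _ (by positivity)
          exact mul_le_mul_of_nonneg_left hFz Real.pi_pos.le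
        refine le_trans h1 ?_
        have hexp : t ^ (n + 1) = t ^ (m + 1) * t ^ (n - m) := by
          rw [← pow_add]
          congr 1
          omega
        have htnm : t ≤ t ^ (n - m) := by
          calc t = t ^ 1 := (pow_one t).symm
            _ ≤ t ^ (n - m) := pow_le_pow_right₀ ht1.le (by omega)
        have h2 : t ^ (m + 1) * (Real.pi * (C / t ^ (n + 1)))
            = Real.pi * C / t ^ (n - m) := by
          rw [hexp]
          field_simp
        rw [h2]
        exact div_le_div_of_nonneg_left (by positivity) ht0 htnm
      -- assemble
      rw [hcm]
      calc ‖(∫ ζ in D, f ζ * ζ ^ (m + 1) / (ζ - z)) - z ^ (m + 1) * ((Real.pi : ℂ) * F z)‖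
          ≤ ‖∫ ζ in D, f ζ * ζ ^ (m + 1) / (ζ - z)‖ + ‖z ^ (m + 1) * ((Real.pi : ℂ) * F z)‖ :=
            norm_sub_le _ _
        _ ≤ (2 * B / t) * A + Real.pi * C / t := add_le_add hRb hFb
        _ = K / t := by
            rw [hKdef]
            field_simp
            ring
    -- let t → ∞
    have h0 : Tendsto (fun t : ℝ => K / t) atTop (nhds 0) :=
      tendsto_const_nhds.div_atTop tendsto_id
    have hev : ∀ᶠ t in atTop, ‖c m‖ ≤ K / t :=
      eventually_atTop.mpr ⟨T + 1, fun t ht => hmain t (by linarith)⟩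
    have hle : ‖c m‖ ≤ 0 := ge_of_tendsto h0 hev
    exact norm_eq_zero.mp (le_antisymm hle (norm_nonneg _))
  -- conclude
  intro m hm
  have hcm := key m hm
  have heq : ∀ z ∈ D, P.eval z * ((starRingEnd ℂ) z) ^ m * Real.exp (-(N : ℝ) * V z)
      = (starRingEnd ℂ) (f z * z ^ m) := by
    intro z hz
    simp only [hfdef, map_mul, map_pow, Complex.conj_conj, Complex.conj_ofReal,
      RingHom.id_apply]
    ring
  rw [setIntegral_congr_fun hDm heq]
  rw [integral_conj]
  have hcc : (∫ x in D, f x * x ^ m) = c m := rfl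
  rw [hcc, hcm, map_zero]
end
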